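/- The strong product C_m ⊠ C_n admits a closed distance magic labeling if and only if (m ≡ 3 (mod 6) and n ≡ 3 (mod 6)) or ({m,n} = {3,x} with x odd). -/

import Mathlib

open Finset SimpleGraph

/-- A closed distance magic labeling of a graph `G` on `n` vertices: a bijection
from the vertices to `{1, …, n}` (encoded via `V ≃ Fin n`, with label `ℓ y + 1`)
such that the sum of labels over every closed neighborhood is the constant `k`. -/
def IsClosedDistanceMagicWith {V : Type*} [Fintype V] [DecidableEq V]
    (G : SimpleGraph V) [DecidableRel G.Adj] (k : ℕ) : Prop :=
  0 < k ∧ ∃ ℓ : V ≃ Fin (Fintype.card V),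
    ∀ x : V, ∑ y ∈ insert x (G.neighborFinset x), ((ℓ y : ℕ) + 1) = k

/-- A graph admitting a closed distance magic labeling. -/
def IsClosedDistanceMagic {V : Type*} [Fintype V] [DecidableEq V]
    (G : SimpleGraph V) [DecidableRel G.Adj] : Prop :=
  ∃ k : ℕ, IsClosedDistanceMagicWith G k


/-- The strong product of two simple graphs. -/
def strongProd {α β : Type*} (G : SimpleGraph α) (H : SimpleGraph β) :
    SimpleGraph (α × β) where
  Adj p q := p ≠ q ∧ (p.1 = q.1 ∨ G.Adj p.1 q.1) ∧ (p.2 = q.2 ∨ H.Adj p.2 q.2)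
  symm := ⟨by
    rintro p q ⟨h1, h2, h3⟩
    exact ⟨h1.symm, h2.elim (fun e => Or.inl e.symm) (fun a => Or.inr a.symm),
      h3.elim (fun e => Or.inl e.symm) (fun a => Or.inr a.symm)⟩⟩
  loopless := ⟨fun p h => h.1 rfl⟩

instance {α β : Type*} [DecidableEq α] [DecidableEq β] (G : SimpleGraph α)
    (H : SimpleGraph β) [DecidableRel G.Adj] [DecidableRel H.Adj] :
    DecidableRel (strongProd G H).Adj := fun p q =>
      show Decidable (p ≠ q ∧ (p.1 = q.1 ∨ G.Adj p.1 q.1) ∧ (p.2 = q.2 ∨ H.Adj p.2 q.2)) from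
        instDecidableAnd


section Windows
variable {m : ℕ} [NeZero m]

def W3 (i : Fin m) : Finset (Fin m) := {i - 1, i, i + 1}

lemma val_sub_one' (hm : 2 ≤ m) (i : Fin m) :
    (i - 1).val = if i.val = 0 then m - 1 else i.val - 1 := by
  rw [Fin.sub_def]
  have h1 : ((1 : Fin m) : ℕ) = 1 := by
    rw [Fin.val_one']; exact Nat.mod_eq_of_lt (by omega)
  simp only [h1]
  have hi := i.isLt
  split_ifs with h
  · simp only [h, add_zero]
    exact Nat.mod_eq_of_lt (by omega)
  · have h2 : m - 1 + i.val = (i.val - 1) + 1 * m := by omega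
    rw [h2, Nat.add_mul_mod_self_right, Nat.mod_eq_of_lt (by omega)]

lemma val_add_one' (hm : 2 ≤ m) (i : Fin m) :
    (i + 1).val = if i.val = m - 1 then 0 else i.val + 1 := by
  rw [Fin.add_def]
  have h1 : ((1 : Fin m) : ℕ) = 1 := by
    rw [Fin.val_one']; exact Nat.mod_eq_of_lt (by omega)
  simp only [h1]
  have hi := i.isLt
  split_ifs with h
  · rw [h]
    have h2 : m - 1 + 1 = m := by omega
    rw [h2, Nat.mod_self]
  · exact Nat.mod_eq_of_lt (by omega)

lemma W3_pairwise (hm : 3 ≤ m) (i : Fin m) :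
    i - 1 ≠ i ∧ i - 1 ≠ i + 1 ∧ i ≠ i + 1 := by
  have h1 := val_sub_one' (by omega) i
  have h2 := val_add_one' (by omega) i
  have hi := i.isLt
  refine ⟨?_, ?_, ?_⟩ <;> rw [Ne, Fin.ext_iff] <;> split_ifs at h1 h2 <;> omega

lemma sum_W3 (hm : 3 ≤ m) (f : Fin m → ℕ) (i : Fin m) :
    ∑ a ∈ W3 i, f a = f (i - 1) + f i + f (i + 1) := by
  obtain ⟨d1, d2, d3⟩ := W3_pairwise hm i
  rw [W3, Finset.sum_insert (by simp [d1, d2]), Finset.sum_insert (by simp [d3]),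
    Finset.sum_singleton, add_assoc]

lemma mem_W3_iff (hm : 3 ≤ m) {a i : Fin m} :
    a ∈ W3 i ↔ a = i - 1 ∨ a = i ∨ a = i + 1 := by
  simp [W3]

lemma W3_symm (hm : 3 ≤ m) {a i : Fin m} : a ∈ W3 i ↔ i ∈ W3 a := by
  rw [mem_W3_iff hm, mem_W3_iff hm]
  constructor <;>
  · rintro (h | h | h) <;> subst h
    · right; right; rw [sub_add_cancel]
    · right; left; rfl
    · left; rw [add_sub_cancel_right]

lemma card_W3 (hm : 3 ≤ m) (i : Fin m) : (W3 i).card = 3 := by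
  have := sum_W3 hm (fun _ => 1) i
  rwa [← Finset.card_eq_sum_ones] at this

end Windows

section Magic9
variable (m n : ℕ) [NeZero m] [NeZero n]

def Magic9 : Prop :=
  ∃ L : Fin m × Fin n → ℕ, Function.Injective L ∧ (∀ p, L p < m * n) ∧
    ∃ k : ℕ, ∀ (i : Fin m) (j : Fin n),
      ∑ a ∈ W3 i, ∑ b ∈ W3 j, (L (a, b) + 1) = k

end Magic9

lemma sum9 {m n : ℕ} [NeZero m] [NeZero n] (hm : 3 ≤ m) (hn : 3 ≤ n)
    (g : Fin m → Fin n → ℕ) (i : Fin m) (j : Fin n) :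
    ∑ a ∈ W3 i, ∑ b ∈ W3 j, g a b =
      g (i-1) (j-1) + g (i-1) j + g (i-1) (j+1) +
      (g i (j-1) + g i j + g i (j+1)) +
      (g (i+1) (j-1) + g (i+1) j + g (i+1) (j+1)) := by
  rw [sum_W3 hm (fun a => ∑ b ∈ W3 j, g a b) i, sum_W3 hn _ j, sum_W3 hn _ j, sum_W3 hn _ j]


lemma strongProd_adj_iff {α β : Type*} (G : SimpleGraph α) (H : SimpleGraph β)
    {p q : α × β} : (strongProd G H).Adj p q ↔
      p ≠ q ∧ (p.1 = q.1 ∨ G.Adj p.1 q.1) ∧ (p.2 = q.2 ∨ H.Adj p.2 q.2) :=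
  Iff.rfl

lemma mem_W3_iff_adj {m : ℕ} [NeZero m] (hm : 3 ≤ m) {a i : Fin m} :
    a ∈ W3 i ↔ a = i ∨ (cycleGraph m).Adj i a := by
  rw [mem_W3_iff hm, cycleGraph_adj']
  have h1 : ∀ x : Fin m, x.val = 1 ↔ x = 1 := by
    intro x
    rw [Fin.ext_iff, Fin.val_one', Nat.mod_eq_of_lt (by omega)]
  rw [h1, h1]
  constructor
  · rintro (h | h | h)
    · right; left; rw [h, sub_sub_cancel]
    · left; exact h
    · right; right; rw [h, add_sub_cancel_left]
  · rintro (h | h | h)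
    · right; left; exact h
    · left
      rw [sub_eq_iff_eq_add] at h
      rw [eq_sub_iff_add_eq, h, add_comm]
    · right; right
      rw [sub_eq_iff_eq_add] at h
      rw [h, add_comm]

lemma closed_nbhd_eq {m n : ℕ} [NeZero m] [NeZero n] (hm : 3 ≤ m) (hn : 3 ≤ n)
    (x : Fin m × Fin n) :
    insert x ((strongProd (cycleGraph m) (cycleGraph n)).neighborFinset x) =
      W3 x.1 ×ˢ W3 x.2 := by
  ext ⟨a, b⟩
  rw [Finset.mem_insert, SimpleGraph.mem_neighborFinset, Finset.mem_product,
    strongProd_adj_iff]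
  constructor
  · rintro (h | ⟨hne, h1, h2⟩)
    · rw [h]
      constructor
      · exact (mem_W3_iff hm).2 (Or.inr (Or.inl rfl))
      · exact (mem_W3_iff hn).2 (Or.inr (Or.inl rfl))
    · constructor
      · exact (mem_W3_iff_adj hm).2 (h1.imp Eq.symm id)
      · exact (mem_W3_iff_adj hn).2 (h2.imp Eq.symm id)
  · rintro ⟨h1, h2⟩
    by_cases hx : (a, b) = x
    · exact Or.inl hx
    · right
      refine ⟨Ne.symm hx, ?_, ?_⟩
      · rcases (mem_W3_iff_adj hm).1 h1 with h | h
        · exact Or.inl h.symm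
        · exact Or.inr h
      · rcases (mem_W3_iff_adj hn).1 h2 with h | h
        · exact Or.inl h.symm
        · exact Or.inr h

lemma magic_iff {m n : ℕ} [NeZero m] [NeZero n] (hm : 3 ≤ m) (hn : 3 ≤ n) :
    IsClosedDistanceMagic (strongProd (cycleGraph m) (cycleGraph n)) ↔ Magic9 m n := by
  have hcard : Fintype.card (Fin m × Fin n) = m * n := by simp
  constructor
  · rintro ⟨k, hk, ℓ, hℓ⟩
    refine ⟨fun p => (ℓ p).val, fun p q h => ℓ.injective (Fin.ext h), ?_, k, ?_⟩
    · intro p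
      have h := (ℓ p).isLt
      show (ℓ p : ℕ) < m * n
      omega
    · intro i j
      have := hℓ (i, j)
      rwa [closed_nbhd_eq hm hn, Finset.sum_product] at this
  · rintro ⟨L, hinj, hbd, k, hk⟩
    have hf : ∀ p, L p < Fintype.card (Fin m × Fin n) := by
      intro p; rw [hcard]; exact hbd p
    set f : (Fin m × Fin n) → Fin (Fintype.card (Fin m × Fin n)) :=
      fun p => ⟨L p, hf p⟩ with hfdef
    have hbij : Function.Bijective f :=
      (Fintype.bijective_iff_injective_and_card f).mpr
        ⟨fun p q h => hinj (congrArg Fin.val h), by simp⟩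
    refine ⟨k, ?_, Equiv.ofBijective f hbij, ?_⟩
    · have h00 := hk 0 0
      rw [sum9 hm hn] at h00
      omega
    · intro x
      rw [closed_nbhd_eq hm hn, Finset.sum_product]
      exact hk x.1 x.2

lemma magic9_symm {m n : ℕ} [NeZero m] [NeZero n] (h : Magic9 m n) : Magic9 n m := by
  obtain ⟨L, hinj, hbd, k, hk⟩ := h
  refine ⟨fun p => L (p.2, p.1), ?_, ?_, k, ?_⟩
  · intro p q hpq
    have := hinj hpq
    rw [Prod.ext_iff] at this ⊢
    exact ⟨this.2, this.1⟩
  · intro p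
    rw [Nat.mul_comm]
    exact hbd _
  · intro i j
    exact (Finset.sum_comm).trans (hk j i)

open Fin.NatCast in
lemma const_of_period3 {n : ℕ} [NeZero n] (hn : 3 ≤ n) (h3 : ¬ 3 ∣ n)
    (f : Fin n → ℕ) (hf : ∀ j, f (j + 1 + 1 + 1) = f j) : ∀ j j', f j = f j' := by
  have key : ∀ (s : ℕ) (j : Fin n), f (j + ((3 * s : ℕ) : Fin n)) = f j := by
    intro s
    induction s with
    | zero => intro j; simp
    | succ s ih =>
      intro j
      have hc : ((3 * (s + 1) : ℕ) : Fin n) = ((3 * s : ℕ) : Fin n) + 1 + 1 + 1 := by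
        rw [show 3 * (s + 1) = 3 * s + 1 + 1 + 1 by ring]
        erw [Nat.cast_add, Nat.cast_add, Nat.cast_add, Nat.cast_one]
      rw [hc, ← add_assoc, ← add_assoc, ← add_assoc, hf, ih]
  have hcop : Nat.Coprime 3 n := (Nat.prime_three.coprime_iff_not_dvd).2 h3
  obtain ⟨u, -, hu⟩ := Nat.exists_mul_mod_eq_one_of_coprime hcop (by omega)
  have h1 : ∀ j : Fin n, f (j + 1) = f j := by
    intro j
    have hcast : ((3 * u : ℕ) : Fin n) = 1 := by
      rw [Fin.ext_iff, Fin.val_natCast, Fin.val_one', hu, Nat.mod_eq_of_lt (by omega)]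
    have := key u j
    rwa [hcast] at this
  have key2 : ∀ (t : ℕ) (j : Fin n), f (j + (t : Fin n)) = f j := by
    intro t
    induction t with
    | zero => intro j; simp
    | succ t ih =>
      intro j
      have hc : ((t + 1 : ℕ) : Fin n) = ((t : ℕ) : Fin n) + 1 := by push_cast; ring
      rw [hc, ← add_assoc, h1, ih]
  intro j j'
  have := key2 (j' - j).val j
  rw [Fin.cast_val_eq_self, add_sub_cancel] at this
  exact this.symm

lemma magic9_parity {m n : ℕ} [NeZero m] [NeZero n] (hm : 3 ≤ m) (hn : 3 ≤ n)
    (h : Magic9 m n) : Odd (m * n) := by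
  obtain ⟨L, hinj, hbd, k, hk⟩ := h
  have hcard : Fintype.card (Fin m × Fin n) = m * n := by simp
  -- double counting
  have h1 : ∑ x : Fin m × Fin n, (∑ p ∈ W3 x.1 ×ˢ W3 x.2, (L p + 1)) = k * (m * n) := by
    have e : ∀ x : Fin m × Fin n, ∑ p ∈ W3 x.1 ×ˢ W3 x.2, (L p + 1) = k := by
      intro x
      rw [Finset.sum_product]
      exact hk x.1 x.2
    simp only [e]
    rw [Finset.sum_const, Finset.card_univ, hcard, smul_eq_mul, Nat.mul_comm]
  have h2 : ∑ x : Fin m × Fin n, (∑ p ∈ W3 x.1 ×ˢ W3 x.2, (L p + 1)) =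
      9 * ∑ p : Fin m × Fin n, (L p + 1) := by
    have e1 : ∀ x : Fin m × Fin n, ∑ p ∈ W3 x.1 ×ˢ W3 x.2, (L p + 1) =
        ∑ p : Fin m × Fin n, if p ∈ W3 x.1 ×ˢ W3 x.2 then (L p + 1) else 0 := by
      intro x
      rw [Finset.sum_ite_mem, Finset.univ_inter]
    simp only [e1]
    rw [Finset.sum_comm, Finset.mul_sum]
    refine Finset.sum_congr rfl (fun p _ => ?_)
    have e2 : ∀ x : Fin m × Fin n, (p ∈ W3 x.1 ×ˢ W3 x.2) ↔ (x ∈ W3 p.1 ×ˢ W3 p.2) := by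
      intro x
      simp only [Finset.mem_product]
      rw [W3_symm hm, W3_symm hn]
    simp only [e2]
    rw [Finset.sum_ite_mem, Finset.univ_inter, Finset.sum_const,
      Finset.card_product, card_W3 hm, card_W3 hn, smul_eq_mul]
  have h3 : ∑ p : Fin m × Fin n, L p = ∑ i ∈ Finset.range (m * n), i := by
    have himg : Finset.image L Finset.univ = Finset.range (m * n) := by
      apply Finset.eq_of_subset_of_card_le
      · intro y hy
        rw [Finset.mem_image] at hy
        obtain ⟨p, _, rfl⟩ := hy
        rw [Finset.mem_range]
        exact hbd p
      · rw [Finset.card_range, Finset.card_image_of_injective _ hinj,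
          Finset.card_univ, hcard]
    rw [← himg, Finset.sum_image (fun x _ y _ h => hinj h)]
  have h4 : (∑ i ∈ Finset.range (m * n), i) * 2 = (m * n) * (m * n - 1) :=
    Finset.sum_range_id_mul_two (m * n)
  have h5 : ∑ p : Fin m × Fin n, (L p + 1) = (∑ p : Fin m × Fin n, L p) + m * n := by
    rw [Finset.sum_add_distrib, Finset.sum_const, Finset.card_univ, hcard, smul_eq_mul,
      Nat.mul_one]
  -- arithmetic
  set N := m * n with hN
  rw [h2, h5, h3] at h1
  set S := ∑ i ∈ Finset.range N, i with hS
  rw [Nat.odd_iff]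
  by_contra hpar
  have hNeven : N % 2 = 0 := by omega
  set t := N / 2 with ht
  have hN2t : N = 2 * t := by omega
  have htpos : 0 < t := by
    have : 9 ≤ N := Nat.mul_le_mul hm hn
    omega
  have hSt : S = t * (N - 1) := by
    have e : N * (N - 1) = 2 * (t * (N - 1)) := by rw [hN2t]; ring
    omega
  have hfin : t * (9 * (N - 1) + 18) = t * (2 * k) := by
    calc t * (9 * (N - 1) + 18) = 9 * (t * (N - 1) + N) := by rw [hN2t]; ring
    _ = k * N := by rw [← hSt]; exact h1
    _ = t * (2 * k) := by rw [hN2t]; ring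
  have := Nat.eq_of_mul_eq_mul_left htpos hfin
  omega

lemma magic9_three {m n : ℕ} [NeZero m] [NeZero n] (hm : 3 ≤ m) (hn : 3 ≤ n)
    (h : Magic9 m n) (h3 : ¬ 3 ∣ n) : m = 3 := by
  obtain ⟨L, hinj, hbd, k, hk⟩ := h
  set g : Fin m → Fin n → ℕ := fun i j => L (i, j) + 1 with hg
  have H9 : ∀ (i : Fin m) (j : Fin n),
      g (i-1) (j-1) + g (i-1) j + g (i-1) (j+1) +
      (g i (j-1) + g i j + g i (j+1)) +
      (g (i+1) (j-1) + g (i+1) j + g (i+1) (j+1)) = k := by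
    intro i j
    rw [← sum9 hm hn]
    exact hk i j
  set T : Fin m → Fin n → ℕ := fun i j => g (i-1) j + g i j + g (i+1) j with hT
  have HT : ∀ (i : Fin m) (j : Fin n), T i (j-1) + T i j + T i (j+1) = k := by
    intro i j
    have := H9 i j
    simp only [hT]
    omega
  have hper : ∀ (i : Fin m) (j : Fin n), T i (j+1+1+1) = T i j := by
    intro i j
    have e1 := HT i (j+1)
    rw [add_sub_cancel_right] at e1
    have e2 := HT i (j+1+1)
    rw [add_sub_cancel_right] at e2
    omega
  have hconst : ∀ (i : Fin m) (j j' : Fin n), T i j = T i j' := by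
    intro i
    exact const_of_period3 hn h3 (T i) (hper i)
  have h3T : ∀ (i : Fin m) (j : Fin n), 3 * T i j = k := by
    intro i j
    have := HT i j
    have e1 := hconst i (j-1) j
    have e2 := hconst i (j+1) j
    omega
  have hTeq : ∀ (i i' : Fin m) (j : Fin n), T i j = T i' j := by
    intro i i' j
    have := h3T i j
    have := h3T i' j
    omega
  have hclaim : ∀ (i : Fin m) (j : Fin n), g (i-1) j = g (i+1+1) j := by
    intro i j
    have e := hTeq i (i+1) j
    simp only [hT] at e
    rw [add_sub_cancel_right] at e
    omega
  have hstep : ∀ (i : Fin m) (j : Fin n), g i j = g (i+1+1+1) j := by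
    intro i j
    have := hclaim (i+1) j
    rwa [add_sub_cancel_right] at this
  by_contra hm3
  have hm4 : 4 ≤ m := by omega
  have hv : ((0 : Fin m)+1+1+1).val = 3 := by
    rw [val_add_one' (by omega), val_add_one' (by omega), val_add_one' (by omega)]
    simp only [Fin.val_zero]
    have e1 : ¬ (0 = m - 1) := by omega
    have e2 : ¬ (0 + 1 = m - 1) := by omega
    have e3 : ¬ (0 + 1 + 1 = m - 1) := by omega
    simp only [e1, e2, e3, if_false]
  have := hstep 0 0
  simp only [hg] at this
  have heq : L (0, 0) = L ((0:Fin m)+1+1+1, (0:Fin n)) := by omega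
  have := hinj heq
  rw [Prod.ext_iff] at this
  have := congrArg Fin.val this.1
  rw [hv] at this
  simp at this

def pfun (c t : ℕ) : ℕ := if t ≤ c then 2*c - 2*t else 4*c + 1 - 2*t
def rfun (c t : ℕ) : ℕ := if t ≤ c then c + t else t - (c+1)
def Ffun (c r q : ℕ) : ℕ := if r = 0 then q else if r = 1 then pfun c q else rfun c q

lemma pfun_le {c t : ℕ} (h : t ≤ 2*c) : pfun c t ≤ 2*c := by
  unfold pfun; split <;> omega

lemma rfun_le {c t : ℕ} (h : t ≤ 2*c) : rfun c t ≤ 2*c := by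
  unfold rfun; split <;> omega

lemma prfun_sum {c t : ℕ} (h : t ≤ 2*c) : t + pfun c t + rfun c t = 3*c := by
  unfold pfun rfun; split <;> omega

lemma pfun_inj {c t t' : ℕ} (h : t ≤ 2*c) (h' : t' ≤ 2*c)
    (he : pfun c t = pfun c t') : t = t' := by
  unfold pfun at he; split_ifs at he <;> omega

lemma rfun_inj {c t t' : ℕ} (h : t ≤ 2*c) (h' : t' ≤ 2*c)
    (he : rfun c t = rfun c t') : t = t' := by
  unfold rfun at he; split_ifs at he <;> omega

lemma Ffun_le {c r q : ℕ} (h : q ≤ 2*c) : Ffun c r q ≤ 2*c := by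
  unfold Ffun
  split_ifs
  · exact h
  · exact pfun_le h
  · exact rfun_le h

lemma Ffun_inj {c r q q' : ℕ} (h : q ≤ 2*c) (h' : q' ≤ 2*c)
    (he : Ffun c r q = Ffun c r q') : q = q' := by
  unfold Ffun at he
  split_ifs at he
  · exact he
  · exact pfun_inj h h' he
  · exact rfun_inj h h' he

lemma Ffun_sum3 (c s q : ℕ) (hq : q ≤ 2*c) :
    Ffun c ((s+2) % 3) q + Ffun c (s % 3) q + Ffun c ((s+1) % 3) q = 3*c := by
  have hp := prfun_sum hq
  have h3 : s % 3 = 0 ∨ s % 3 = 1 ∨ s % 3 = 2 := by omega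
  rcases h3 with h | h | h
  · have e1 : (s+2) % 3 = 2 := by omega
    have e2 : (s+1) % 3 = 1 := by omega
    rw [e1, e2, h]
    simp only [Ffun]
    norm_num
    omega
  · have e1 : (s+2) % 3 = 0 := by omega
    have e2 : (s+1) % 3 = 2 := by omega
    rw [e1, e2, h]
    simp only [Ffun]
    norm_num
    omega
  · have e1 : (s+2) % 3 = 1 := by omega
    have e2 : (s+1) % 3 = 0 := by omega
    rw [e1, e2, h]
    simp only [Ffun]
    norm_num
    omega

lemma pair_lt {m n u v : ℕ} (hu : u < m) (hv : v < n) : u + m * v < m * n := by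
  calc u + m * v < m + m * v := by omega
  _ = m * (v + 1) := by ring
  _ ≤ m * n := Nat.mul_le_mul_left m (by omega)

lemma pair_inj {m u v u' v' : ℕ} (hu : u < m) (hu' : u' < m)
    (h : u + m * v = u' + m * v') : u = u' ∧ v = v' := by
  have e1 : (u + m * v) % m = u := by
    rw [Nat.add_mul_mod_self_left, Nat.mod_eq_of_lt hu]
  have e2 : (u' + m * v') % m = u' := by
    rw [Nat.add_mul_mod_self_left, Nat.mod_eq_of_lt hu']
  have huu : u = u' := by rw [← e1, ← e2, h]
  refine ⟨huu, ?_⟩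
  have : m * v = m * v' := by omega
  exact Nat.eq_of_mul_eq_mul_left (by omega) this

lemma decomp_lt {A e f : ℕ} (he : e < 3) (hf : f < A) : e * A + f < 3 * A := by
  calc e * A + f < e * A + A := by omega
  _ = (e + 1) * A := by ring
  _ ≤ 3 * A := Nat.mul_le_mul_right A (by omega)

lemma decomp_inj {A e f e' f' : ℕ} (hf : f < A) (hf' : f' < A)
    (h : e * A + f = e' * A + f') : e = e' ∧ f = f' := by
  have h' : f + A * e = f' + A * e' := by
    rw [Nat.mul_comm A e, Nat.mul_comm A e']
    omega
  obtain ⟨a, b⟩ := pair_inj hf hf' h'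
  exact ⟨b, a⟩

lemma suffA (n d : ℕ) [NeZero n] (hn : n = 2*d+1) (hd : 1 ≤ d) : Magic9 3 n := by
  subst hn
  refine ⟨fun p => p.1.val + 3 * Ffun d p.1.val p.2.val, ?_, ?_, 27*d+18, ?_⟩
  · rintro ⟨i, j⟩ ⟨i', j'⟩ h
    simp only at h
    have hi := i.isLt
    have hi' := i'.isLt
    have hj := j.isLt
    have hj' := j'.isLt
    have hii : i.val = i'.val ∧ Ffun d i.val j.val = Ffun d i'.val j'.val := by omega
    obtain ⟨e1, e2⟩ := hii
    rw [e1] at e2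
    have e3 : j.val = j'.val := Ffun_inj (by omega) (by omega) e2
    rw [Prod.ext_iff, Fin.ext_iff, Fin.ext_iff]
    exact ⟨e1, e3⟩
  · rintro ⟨i, j⟩
    simp only
    have hi := i.isLt
    have hF : Ffun d i.val j.val ≤ 2*d := Ffun_le (by omega)
    omega
  · intro i j
    rw [sum9 (by omega) (by omega)]
    simp only
    have hiv := i.isLt
    have ha : (i+1).val = (i.val+1) % 3 := by
      rw [val_add_one' (by omega)]
      split_ifs <;> omega
    have hs : (i-1).val = (i.val+2) % 3 := by
      rw [val_sub_one' (by omega)]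
      split_ifs <;> omega
    rw [ha, hs]
    have hb1 : (j-1).val ≤ 2*d := by have := (j-1).isLt; omega
    have hb2 : j.val ≤ 2*d := by have := j.isLt; omega
    have hb3 : (j+1).val ≤ 2*d := by have := (j+1).isLt; omega
    have hc1 := Ffun_sum3 d i.val (j-1).val hb1
    have hc2 := Ffun_sum3 d i.val j.val hb2
    have hc3 := Ffun_sum3 d i.val (j+1).val hb3
    rw [Nat.mod_eq_of_lt hiv] at hc1 hc2 hc3
    omega

lemma suffC (m n α β : ℕ) [NeZero m] [NeZero n]
    (hm : m = 3*(2*α+1)) (hn : n = 3*(2*β+1)) : Magic9 m n := by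
  subst hm hn
  refine ⟨fun p => ((p.1.val % 3) * (2*α+1) + Ffun α (p.2.val % 3) (p.1.val / 3))
      + (3*(2*α+1)) * ((p.2.val % 3) * (2*β+1) + Ffun β (p.1.val % 3) (p.2.val / 3)),
    ?_, ?_, (9*(2*α+1) + 9*α) + (3*(2*α+1)) * (9*(2*β+1) + 9*β) + 9, ?_⟩
  · rintro ⟨i, j⟩ ⟨i', j'⟩ h
    simp only at h
    have hi := i.isLt
    have hj := j.isLt
    have hi' := i'.isLt
    have hj' := j'.isLt
    have hFu : Ffun α (j.val % 3) (i.val / 3) < 2*α+1 := by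
      have := Ffun_le (c := α) (r := j.val % 3) (q := i.val / 3) (by omega); omega
    have hFu' : Ffun α (j'.val % 3) (i'.val / 3) < 2*α+1 := by
      have := Ffun_le (c := α) (r := j'.val % 3) (q := i'.val / 3) (by omega); omega
    have hFv : Ffun β (i.val % 3) (j.val / 3) < 2*β+1 := by
      have := Ffun_le (c := β) (r := i.val % 3) (q := j.val / 3) (by omega); omega
    have hFv' : Ffun β (i'.val % 3) (j'.val / 3) < 2*β+1 := by
      have := Ffun_le (c := β) (r := i'.val % 3) (q := j'.val / 3) (by omega); omega
    have hu : (i.val % 3) * (2*α+1) + Ffun α (j.val % 3) (i.val / 3) < 3*(2*α+1) :=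
      decomp_lt (by omega) hFu
    have hu' : (i'.val % 3) * (2*α+1) + Ffun α (j'.val % 3) (i'.val / 3) < 3*(2*α+1) :=
      decomp_lt (by omega) hFu'
    obtain ⟨h1, h2⟩ := pair_inj hu hu' h
    obtain ⟨e1, f1⟩ := decomp_inj hFu hFu' h1
    obtain ⟨e2, f2⟩ := decomp_inj hFv hFv' h2
    rw [e2] at f1
    rw [e1] at f2
    have d1 : i.val / 3 = i'.val / 3 := Ffun_inj (by omega) (by omega) f1
    have d2 : j.val / 3 = j'.val / 3 := Ffun_inj (by omega) (by omega) f2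
    simp only [Prod.mk.injEq, Fin.ext_iff]
    constructor <;> omega
  · rintro ⟨i, j⟩
    simp only
    have hi := i.isLt
    have hj := j.isLt
    have hu : (i.val % 3) * (2*α+1) + Ffun α (j.val % 3) (i.val / 3) < 3*(2*α+1) := by
      refine decomp_lt (by omega) ?_
      have := Ffun_le (c := α) (r := j.val % 3) (q := i.val / 3) (by omega); omega
    have hv : (j.val % 3) * (2*β+1) + Ffun β (i.val % 3) (j.val / 3) < 3*(2*β+1) := by
      refine decomp_lt (by omega) ?_
      have := Ffun_le (c := β) (r := i.val % 3) (q := j.val / 3) (by omega); omega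
    exact pair_lt hu hv
  · intro i j
    rw [sum9 (by omega) (by omega)]
    simp only
    have hi := i.isLt
    have hj := j.isLt
    have er1 : (i-1).val % 3 = (i.val+2) % 3 := by
      rw [val_sub_one' (by omega)]
      split_ifs <;> omega
    have er2 : (i+1).val % 3 = (i.val+1) % 3 := by
      rw [val_add_one' (by omega)]
      split_ifs <;> omega
    have ec1 : (j-1).val % 3 = (j.val+2) % 3 := by
      rw [val_sub_one' (by omega)]
      split_ifs <;> omega
    have ec2 : (j+1).val % 3 = (j.val+1) % 3 := by
      rw [val_add_one' (by omega)]
      split_ifs <;> omega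
    rw [er1, er2, ec1, ec2]
    have hq1 : (i-1).val / 3 ≤ 2*α := by have := (i-1).isLt; omega
    have hq2 : i.val / 3 ≤ 2*α := by omega
    have hq3 : (i+1).val / 3 ≤ 2*α := by have := (i+1).isLt; omega
    have hp1 : (j-1).val / 3 ≤ 2*β := by have := (j-1).isLt; omega
    have hp2 : j.val / 3 ≤ 2*β := by omega
    have hp3 : (j+1).val / 3 ≤ 2*β := by have := (j+1).isLt; omega
    have hU1 := Ffun_sum3 α j.val ((i-1).val / 3) hq1
    have hU2 := Ffun_sum3 α j.val (i.val / 3) hq2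
    have hU3 := Ffun_sum3 α j.val ((i+1).val / 3) hq3
    have hV1 := Ffun_sum3 β i.val ((j-1).val / 3) hp1
    have hV2 := Ffun_sum3 β i.val (j.val / 3) hp2
    have hV3 := Ffun_sum3 β i.val ((j+1).val / 3) hp3
    have hrr : (i.val+2) % 3 + i.val % 3 + (i.val+1) % 3 = 3 := by omega
    have hcc : (j.val+2) % 3 + j.val % 3 + (j.val+1) % 3 = 3 := by omega
    zify at hU1 hU2 hU3 hV1 hV2 hV3 hrr hcc ⊢
    linear_combination (3*(2*(α:ℤ)+1)) * hrr + hU1 + hU2 + hU3 +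
      (9*(2*(α:ℤ)+1)*(2*(β:ℤ)+1)) * hcc + (3*(2*(α:ℤ)+1)) * (hV1 + hV2 + hV3)

theorem stmt_13 (m n : ℕ) (hm : 3 ≤ m) (hn : 3 ≤ n) :
    IsClosedDistanceMagic (strongProd (cycleGraph m) (cycleGraph n)) ↔
      (m % 6 = 3 ∧ n % 6 = 3) ∨ (m = 3 ∧ Odd n) ∨ (n = 3 ∧ Odd m) := by
  haveI : NeZero m := ⟨by omega⟩
  haveI : NeZero n := ⟨by omega⟩
  rw [magic_iff hm hn]
  constructor
  · intro h
    have hodd : Odd (m * n) := magic9_parity hm hn h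
    rw [Nat.odd_mul] at hodd
    have hom := Nat.odd_iff.1 hodd.1
    have hon := Nat.odd_iff.1 hodd.2
    by_cases h3n : 3 ∣ n
    · by_cases h3m : 3 ∣ m
      · left
        constructor <;> omega
      · right; right
        have := magic9_three hn hm (magic9_symm h) h3m
        exact ⟨this, Nat.odd_iff.2 hom⟩
    · right; left
      have := magic9_three hm hn h h3n
      exact ⟨this, Nat.odd_iff.2 hon⟩
  · rintro (⟨h1, h2⟩ | ⟨rfl, hodd⟩ | ⟨rfl, hodd⟩)
    · exact suffC m n (m / 6) (n / 6) (by omega) (by omega)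
    · have hno := Nat.odd_iff.1 hodd
      exact suffA n (n / 2) (by omega) (by omega)
    · have hmo := Nat.odd_iff.1 hodd
      exact magic9_symm (suffA m (m / 2) (by omega) (by omega))
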